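/- Let c < -3/2 and define F : ℝ⁴ → ℝ by F(w₁,w₂,z₁,z₂) = -1 + 4(w₁z₂ - w₂z₁)(w₁²+w₂²+z₁²+z₂²)² - 2c(w₁²+w₂²+z₁²+z₂²)². If (w₁,w₂,z₁,z₂) ∈ ℝ⁴ satisfies 0 < w₁²+w₂²+z₁²+z₂² < 1 and F(w₁,w₂,z₁,z₂) = 0, then the gradient of F at (w₁,w₂,z₁,z₂) is nonzero; i.e., the bounded component of the level set F = 0 is a regular hypersurface. -/

import Mathlib

/-- On the bounded component `0 < ‖(w,z)‖² < 1` of the level set `F = 0`,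
with `c < -3/2`, the gradient of
`F(w₁,w₂,z₁,z₂) = -1 + 4(w₁z₂-w₂z₁)(w₁²+w₂²+z₁²+z₂²)² - 2c(w₁²+w₂²+z₁²+z₂²)²`
is nonzero. -/
theorem gradient_ne_zero_on_bounded_component (c : ℝ) (hc : c < -3/2)
    (p : EuclideanSpace ℝ (Fin 4))
    (h0 : 0 < p 0 ^ 2 + p 1 ^ 2 + p 2 ^ 2 + p 3 ^ 2)
    (h1 : p 0 ^ 2 + p 1 ^ 2 + p 2 ^ 2 + p 3 ^ 2 < 1)
    (hF : -1 + 4 * (p 0 * p 3 - p 1 * p 2)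
            * (p 0 ^ 2 + p 1 ^ 2 + p 2 ^ 2 + p 3 ^ 2) ^ 2
          - 2 * c * (p 0 ^ 2 + p 1 ^ 2 + p 2 ^ 2 + p 3 ^ 2) ^ 2 = 0) :
    gradient (fun q : EuclideanSpace ℝ (Fin 4) =>
        -1 + 4 * (q 0 * q 3 - q 1 * q 2)
              * (q 0 ^ 2 + q 1 ^ 2 + q 2 ^ 2 + q 3 ^ 2) ^ 2
          - 2 * c * (q 0 ^ 2 + q 1 ^ 2 + q 2 ^ 2 + q 3 ^ 2) ^ 2) p ≠ 0 := by
  set f : EuclideanSpace ℝ (Fin 4) → ℝ := fun q =>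
        -1 + 4 * (q 0 * q 3 - q 1 * q 2)
              * (q 0 ^ 2 + q 1 ^ 2 + q 2 ^ 2 + q 3 ^ 2) ^ 2
          - 2 * c * (q 0 ^ 2 + q 1 ^ 2 + q 2 ^ 2 + q 3 ^ 2) ^ 2 with hf
  have hq : ∀ i : Fin 4, HasFDerivAt (fun q : EuclideanSpace ℝ (Fin 4) => q i)
      (PiLp.proj (𝕜 := ℝ) 2 (fun _ : Fin 4 => ℝ) i) p := fun i => by
    exact (PiLp.proj (𝕜 := ℝ) 2 (fun _ : Fin 4 => ℝ) i).hasFDerivAt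
  have hμ := ((hq 0).mul (hq 3)).sub ((hq 1).mul (hq 2))
  have hS := (((hq 0).mul (hq 0)).add ((hq 1).mul (hq 1))).add
      (((hq 2).mul (hq 2)).add ((hq 3).mul (hq 3)))
  have hS2 := hS.mul hS
  have hbig := ((hμ.const_mul (4:ℝ)).mul hS2).const_add (-1) |>.sub (hS2.const_mul (2*c))
  have hd : HasFDerivAt f _ p :=
    hbig.congr_of_eventuallyEq (Filter.Eventually.of_forall fun q => by
      simp only [hf, Pi.mul_apply, Pi.sub_apply, Pi.add_apply]; ring)
  intro hgrad
  unfold gradient at hgrad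
  rw [hd.fderiv, EmbeddingLike.map_eq_zero_iff] at hgrad
  have hDp := congrArg (fun (L : EuclideanSpace ℝ (Fin 4) →L[ℝ] ℝ) => L p) hgrad
  simp only [ContinuousLinearMap.add_apply, ContinuousLinearMap.sub_apply,
    ContinuousLinearMap.smul_apply, ContinuousLinearMap.coe_smul', Pi.smul_apply,
    PiLp.proj_apply, smul_eq_mul, ContinuousLinearMap.zero_apply,
    Pi.mul_apply, Pi.sub_apply, Pi.add_apply] at hDp
  -- hDp says the directional derivative along p vanishes; derive a contradiction
  nlinarith [sq_nonneg (p 0 + p 3), sq_nonneg (p 1 - p 2), sq_nonneg (p 0 - p 3),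
    sq_nonneg (p 1 + p 2), mul_pos h0 h0, sq_nonneg (p 0^2+p 1^2+p 2^2+p 3^2),
    mul_pos (mul_pos h0 h0) h0]
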